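/- arXiv:1504.01007 — 2 statements merged into one kernel-verified Lean document; each statement's English description precedes it below -/
import Mathlib

section
/- Let (m_1,...,m_k) and (n_1,...,n_k) be strictly increasing k-tuples of nonnegative integers with n_i ≥ m_i for all i; set m = ∑ m_i and n + m = ∑ n_i. Then the number of directed paths from (m_1,...,m_k) to (n_1,...,n_k) in the restricted Young graph (edges increase one coordinate by 1, preserving strict monotonicity and nonnegativity) equals (n!/∏ n_i!) · det(n_i^{(m_j)})_{i,j}, where c^{(m)} = c(c-1)···(c-m+1). -/
open Finset

/-- A directed path of length `n` from `v` to `u` in the restricted Young graph `Y_k`: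
vertices are strictly increasing `k`-tuples of nonnegative integers, each step
increases exactly one coordinate by `1`. -/
def YoungPath (k n : ℕ) (v u : Fin k → ℕ) : Type :=
  { f : Fin (n + 1) → (Fin k → ℕ) //
      f 0 = v ∧ f (Fin.last n) = u ∧ (∀ j, StrictMono (f j)) ∧
      ∀ j : Fin n, ∃ i : Fin k,
        f j.succ = Function.update (f j.castSucc) i (f j.castSucc i + 1) }

/-- The rational falling factorial `x (x-1) ⋯ (x-m+1)`. -/
def fallFacQ (x : ℚ) (m : ℕ) : ℚ := ∏ j ∈ Finset.range m, (x - j)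

/-! ### Falling factorial lemmas -/

lemma fallFacQ_eq_zero {a m : ℕ} (h : a < m) : fallFacQ a m = 0 := by
  apply Finset.prod_eq_zero (Finset.mem_range.2 h); simp

lemma fallFacQ_self (a : ℕ) : fallFacQ a a = a.factorial := by
  induction a with
  | zero => simp [fallFacQ]
  | succ n ih =>
    rw [fallFacQ, Finset.prod_range_succ']
    push_cast
    have : ∀ j ∈ Finset.range n, ((n : ℚ) + 1 - (j + 1)) = (n : ℚ) - j := by intros; ring
    rw [Finset.prod_congr rfl this]
    rw [show (∏ j ∈ Finset.range n, ((n : ℚ) - j)) = fallFacQ n n from rfl, ih]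
    push_cast [Nat.factorial_succ]
    ring

lemma fallFacQ_step (x : ℚ) (m : ℕ) : x * fallFacQ (x - 1) m = (x - m) * fallFacQ x m := by
  have h1 : fallFacQ x (m + 1) = fallFacQ x m * (x - m) := Finset.prod_range_succ _ _
  have h2 : fallFacQ x (m + 1) = x * fallFacQ (x - 1) m := by
    rw [fallFacQ, Finset.prod_range_succ']
    have : ∀ j ∈ Finset.range m, (x - (j + 1 : ℕ)) = (x - 1) - j := by
      intro j _; push_cast; ring
    rw [Finset.prod_congr rfl this]
    simp [fallFacQ, mul_comm]
  rw [← h2, h1]; ring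

/-! ### Determinant lemmas -/

lemma det_vanish {k : ℕ} (c m : Fin k → ℕ) (hc : Monotone c) (hm : Monotone m)
    (i : Fin k) (h : c i < m i) :
    Matrix.det (Matrix.of fun p j : Fin k => fallFacQ (c p : ℚ) (m j)) = 0 := by
  rw [Matrix.det_apply]
  refine Finset.sum_eq_zero fun σ _ => ?_
  have : ∃ p : Fin k, i ≤ p ∧ σ p ≤ i := by
    by_contra hcon
    push_neg at hcon
    have himg : ∀ p ∈ Finset.Ici i, σ p ∈ Finset.Ioi i := fun p hp =>
      Finset.mem_Ioi.2 (hcon p (Finset.mem_Ici.1 hp))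
    have hcard := Finset.card_le_card_of_injOn σ himg (σ.injective.injOn)
    rw [Fin.card_Ici, Fin.card_Ioi] at hcard
    omega
  obtain ⟨p, hip, hpi⟩ := this
  have hz : fallFacQ (c (σ p) : ℚ) (m p) = 0 :=
    fallFacQ_eq_zero (lt_of_le_of_lt (hc hpi) (lt_of_lt_of_le h (hm hip)))
  rw [Finset.prod_eq_zero (Finset.mem_univ p)]
  · simp
  · exact hz

lemma det_triangle {k : ℕ} (c : Fin k → ℕ) (hc : StrictMono c) :
    Matrix.det (Matrix.of fun i j : Fin k => fallFacQ (c i : ℚ) (c j))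
      = ∏ i, ((c i).factorial : ℚ) := by
  have hbt : (Matrix.of fun i j : Fin k => fallFacQ (c i : ℚ) (c j)).BlockTriangular
      OrderDual.toDual := fun i j hij => fallFacQ_eq_zero (hc hij)
  rw [Matrix.det_of_lowerTriangular _ hbt]
  exact Finset.prod_congr rfl fun i _ => fallFacQ_self (c i)

lemma det_rec {k : ℕ} (c : Fin k → ℚ) (m : Fin k → ℕ) :
    ∑ i, c i * Matrix.det (Matrix.of fun p j : Fin k =>
        fallFacQ (Function.update c i (c i - 1) p) (m j))
      = ((∑ i, c i) - ∑ i, (m i : ℚ)) *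
        Matrix.det (Matrix.of fun p j : Fin k => fallFacQ (c p) (m j)) := by
  simp only [Matrix.det_apply', Matrix.of_apply, Finset.mul_sum]
  rw [Finset.sum_comm]
  refine Finset.sum_congr rfl fun σ _ => ?_
  have key : ∀ i, c i * ∏ p, fallFacQ (Function.update c i (c i - 1) (σ p)) (m p)
      = (c i - m (σ.symm i)) * ∏ p, fallFacQ (c (σ p)) (m p) := by
    intro i
    set p₀ := σ.symm i with hp₀
    have hσp₀ : σ p₀ = i := Equiv.apply_symm_apply σ i
    have h1 : (∏ p, fallFacQ (Function.update c i (c i - 1) (σ p)) (m p))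
        = fallFacQ (c i - 1) (m p₀) * ∏ p ∈ Finset.univ.erase p₀,
            fallFacQ (c (σ p)) (m p) := by
      rw [← Finset.mul_prod_erase Finset.univ _ (Finset.mem_univ p₀)]
      congr 1
      · rw [hσp₀, Function.update_self]
      · refine Finset.prod_congr rfl fun p hp => ?_
        have hne : σ p ≠ i := fun he =>
          (Finset.mem_erase.1 hp).1 (σ.injective (he.trans hσp₀.symm))
        rw [Function.update_of_ne hne]
    have h2 : (∏ p, fallFacQ (c (σ p)) (m p))
        = fallFacQ (c i) (m p₀) * ∏ p ∈ Finset.univ.erase p₀,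
            fallFacQ (c (σ p)) (m p) := by
      rw [← Finset.mul_prod_erase Finset.univ _ (Finset.mem_univ p₀), hσp₀]
    rw [h1, h2, ← mul_assoc, ← mul_assoc, fallFacQ_step (c i) (m p₀)]
  calc ∑ i, c i * (Equiv.Perm.sign σ *
        ∏ p, fallFacQ (Function.update c i (c i - 1) (σ p)) (m p))
      = ∑ i, (Equiv.Perm.sign σ : ℚ) *
          ((c i - m (σ.symm i)) * ∏ p, fallFacQ (c (σ p)) (m p)) := by
        refine Finset.sum_congr rfl fun i _ => ?_
        rw [← key i]; ring
    _ = ((∑ i, c i) - ∑ i, (m i : ℚ)) *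
        ((Equiv.Perm.sign σ) * ∏ p, fallFacQ (c (σ p)) (m p)) := by
        rw [← Finset.mul_sum, ← Finset.sum_mul]
        have : ∑ i, (c i - (m (σ.symm i) : ℚ)) = (∑ i, c i) - ∑ i, (m i : ℚ) := by
          rw [Finset.sum_sub_distrib, Equiv.sum_comp σ.symm (fun i => (m i : ℚ))]
        rw [this]; ring

/-! ### Path counting lemmas -/

instance YoungPath.finite (k n : ℕ) (v u : Fin k → ℕ) : Finite (YoungPath k n v u) := by
  classical
  apply Finite.of_injective
    (fun P : YoungPath k n v u => fun j : Fin n => Classical.choose (P.2.2.2.2 j))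
  intro P Q h
  set sP := (fun j : Fin n => Classical.choose (P.2.2.2.2 j)) with hsPdef
  set sQ := (fun j : Fin n => Classical.choose (Q.2.2.2.2 j)) with hsQdef
  have hstepP : ∀ j : Fin n, P.1 j.succ
      = Function.update (P.1 j.castSucc) (sP j) (P.1 j.castSucc (sP j) + 1) :=
    fun j => Classical.choose_spec (P.2.2.2.2 j)
  have hstepQ : ∀ j : Fin n, Q.1 j.succ
      = Function.update (Q.1 j.castSucc) (sQ j) (Q.1 j.castSucc (sQ j) + 1) :=
    fun j => Classical.choose_spec (Q.2.2.2.2 j)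
  have h' : sP = sQ := h
  clear_value sP sQ
  apply Subtype.ext
  funext j
  induction j using Fin.induction with
  | zero => rw [P.2.1, Q.2.1]
  | succ j ih =>
    rw [hstepP j, hstepQ j, ih, h']

lemma YoungPath.card_zero_self {k : ℕ} (v : Fin k → ℕ) (hv : StrictMono v) :
    Nat.card (YoungPath k 0 v v) = 1 := by
  have hlast0 : (Fin.last 0) = (0 : Fin (0 + 1)) := by decide
  have h1 : ∀ P : YoungPath k 0 v v, P = ⟨fun _ => v, rfl, by rw [hlast0],
      fun _ => hv, fun j => j.elim0⟩ := by
    intro P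
    apply Subtype.ext
    funext j
    have hj : j = 0 := Fin.ext (by omega)
    rw [hj, P.2.1]
  haveI : Unique (YoungPath k 0 v v) := { default := _, uniq := h1 }
  simp [Nat.card_unique]

lemma YoungPath.card_zero_ne {k : ℕ} (v u : Fin k → ℕ) (h : v ≠ u) :
    Nat.card (YoungPath k 0 v u) = 0 := by
  haveI : IsEmpty (YoungPath k 0 v u) := by
    constructor
    intro P
    obtain ⟨f, h0, hl, -, -⟩ := P
    apply h
    have hlast0 : (0 : Fin (0 + 1)) = Fin.last 0 := by decide
    rw [← h0, ← hl]
    exact congrArg f hlast0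
  simp

lemma YoungPath.card_not_mono {k n : ℕ} (v u : Fin k → ℕ) (h : ¬ StrictMono u) :
    Nat.card (YoungPath k n v u) = 0 := by
  haveI : IsEmpty (YoungPath k n v u) := by
    constructor
    intro P
    exact h (P.2.2.1 ▸ P.2.2.2.1 (Fin.last n))
  simp

lemma YoungPath.card_of_lt {k n : ℕ} {v u : Fin k → ℕ} (i : Fin k) (h : u i < v i) :
    Nat.card (YoungPath k n v u) = 0 := by
  haveI : IsEmpty (YoungPath k n v u) := by
    constructor
    rintro ⟨f, h0, hl, -, hstep⟩
    have H : ∀ j : Fin (n + 1), f 0 i ≤ f j i := by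
      intro j
      induction j using Fin.induction with
      | zero => exact le_refl _
      | succ j ih =>
        obtain ⟨i', hs⟩ := hstep j
        rw [hs]
        rcases eq_or_ne i i' with rfl | hne
        · rw [Function.update_self]
          exact le_trans ih (Nat.le_succ _)
        · rw [Function.update_of_ne hne]
          exact ih
    have := H (Fin.last n)
    rw [h0, hl] at this
    omega
  simp

/-- append the final vertex `u` to a path ending one step below `u` -/
def YoungPath.snocPath {k n : ℕ} {v u : Fin k → ℕ} (hu : StrictMono u)
    (x : Σ i : {i : Fin k // u i ≠ 0}, YoungPath k n v (Function.update u i.1 (u i.1 - 1))) :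
    YoungPath k (n + 1) v u := by
  obtain ⟨⟨i, hi⟩, g, hg0, hgl, hgsm, hgstep⟩ := x
  refine ⟨Fin.snoc g u, ?_, ?_, ?_, ?_⟩
  · rw [show (0 : Fin (n + 1 + 1)) = Fin.castSucc 0 from rfl, Fin.snoc_castSucc, hg0]
  · exact Fin.snoc_last _ _
  · intro j
    induction j using Fin.lastCases with
    | last => rw [Fin.snoc_last]; exact hu
    | cast j => rw [Fin.snoc_castSucc]; exact hgsm j
  · intro j
    induction j using Fin.lastCases with
    | last =>
      refine ⟨i, ?_⟩
      rw [Fin.succ_last, Fin.snoc_last, Fin.snoc_castSucc, hgl]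
      funext p
      rcases eq_or_ne p i with rfl | hp
      · simp [Function.update_self]
        omega
      · simp [Function.update_of_ne hp]
    | cast j =>
      obtain ⟨i', hi'⟩ := hgstep j
      refine ⟨i', ?_⟩
      rw [Fin.succ_castSucc, Fin.snoc_castSucc, Fin.snoc_castSucc, hi']

lemma YoungPath.snocPath_val {k n : ℕ} {v u : Fin k → ℕ} (hu : StrictMono u)
    (x : Σ i : {i : Fin k // u i ≠ 0}, YoungPath k n v (Function.update u i.1 (u i.1 - 1))) :
    (YoungPath.snocPath hu x).1 = Fin.snoc x.2.1 u := by
  obtain ⟨⟨i, hi⟩, g, hg0, hgl, hgsm, hgstep⟩ := x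
  rfl

lemma YoungPath.snocPath_bijective {k n : ℕ} {v u : Fin k → ℕ} (hu : StrictMono u) :
    Function.Bijective (YoungPath.snocPath (k := k) (n := n) (v := v) hu) := by
  constructor
  · rintro ⟨⟨i, hi⟩, g, hgpf⟩ ⟨⟨i', hi'⟩, g', hgpf'⟩ h
    have hval : (Fin.snoc g u : Fin (n + 1 + 1) → Fin k → ℕ)
        = Fin.snoc g' u := by
      have h1 := YoungPath.snocPath_val hu ⟨⟨i, hi⟩, g, hgpf⟩
      have h2 := YoungPath.snocPath_val hu ⟨⟨i', hi'⟩, g', hgpf'⟩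
      rw [← h1, ← h2, h]
    have hgg : g = g' := by
      funext j
      have := congrFun hval j.castSucc
      rwa [Fin.snoc_castSucc, Fin.snoc_castSucc] at this
    subst hgg
    have hupd : Function.update u i (u i - 1) = Function.update u i' (u i' - 1) := by
      rw [← hgpf.2.1, ← hgpf'.2.1]
    have hii : i = i' := by
      by_contra hne
      have h1 := congrFun hupd i
      rw [Function.update_self, Function.update_of_ne hne] at h1
      omega
    subst hii
    rfl
  · rintro ⟨f, h0, hl, hsm, hstep⟩
    obtain ⟨i, hi⟩ := hstep (Fin.last n)
    rw [Fin.succ_last, hl] at hi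
    have hui : u i = f (Fin.last n).castSucc i + 1 := by rw [hi]; simp
    have hine : u i ≠ 0 := by omega
    have hw : f (Fin.last n).castSucc = Function.update u i (u i - 1) := by
      funext p
      rcases eq_or_ne p i with rfl | hp
      · rw [Function.update_self]; omega
      · rw [Function.update_of_ne hp, hi, Function.update_of_ne hp]
    refine ⟨⟨⟨i, hine⟩, ⟨fun j => f j.castSucc, h0, hw, fun j => hsm _, ?_⟩⟩, ?_⟩
    · intro j
      obtain ⟨i', h'⟩ := hstep j.castSucc
      refine ⟨i', ?_⟩
      show f (j.succ).castSucc = _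
      rw [← Fin.succ_castSucc]
      exact h'
    · apply Subtype.ext
      rw [YoungPath.snocPath_val]
      funext j
      induction j using Fin.lastCases with
      | last => rw [Fin.snoc_last]; exact hl.symm
      | cast j => rw [Fin.snoc_castSucc]

lemma YoungPath.card_succ {k n : ℕ} (v u : Fin k → ℕ) (hu : StrictMono u) :
    Nat.card (YoungPath k (n + 1) v u)
      = ∑ i ∈ Finset.univ.filter (fun i => u i ≠ 0),
          Nat.card (YoungPath k n v (Function.update u i (u i - 1))) := by
  classical
  rw [← Nat.card_eq_of_bijective _ (YoungPath.snocPath_bijective (v := v) hu)]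
  haveI : ∀ i : {i : Fin k // u i ≠ 0},
      Fintype (YoungPath k n v (Function.update u i.1 (u i.1 - 1))) :=
    fun _ => Fintype.ofFinite _
  rw [Nat.card_eq_fintype_card, Fintype.card_sigma]
  rw [show (∑ i : {i : Fin k // u i ≠ 0},
        Fintype.card (YoungPath k n v (Function.update u i.1 (u i.1 - 1))))
      = ∑ i : {i : Fin k // u i ≠ 0},
        Nat.card (YoungPath k n v (Function.update u i.1 (u i.1 - 1))) from
    Finset.sum_congr rfl fun i _ => Nat.card_eq_fintype_card.symm]
  exact (Finset.sum_subtype (p := fun i => u i ≠ 0)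
    (Finset.univ.filter fun i => u i ≠ 0) (fun x => by simp)
    (fun i => Nat.card (YoungPath k n v (Function.update u i (u i - 1))))).symm

/-! ### Main induction -/

lemma main_formula {k : ℕ} (m : Fin k → ℕ) (hm : StrictMono m) :
    ∀ N : ℕ, ∀ c : Fin k → ℕ, StrictMono c → (∑ i, c i) = N →
    (Nat.card (YoungPath k ((∑ i, c i) - ∑ i, m i) m c) : ℚ)
      = (((∑ i, c i) - ∑ i, m i).factorial : ℚ) / (∏ i, ((c i).factorial : ℚ))
        * Matrix.det (Matrix.of fun i j : Fin k => fallFacQ (c i : ℚ) (m j)) := by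
  intro N
  induction N using Nat.strong_induction_on with
  | _ N IH =>
  intro c hc hcN
  have hprodne : (∏ i, ((c i).factorial : ℚ)) ≠ 0 :=
    Finset.prod_ne_zero_iff.2 fun i _ => Nat.cast_ne_zero.2 (c i).factorial_ne_zero
  by_cases hle : ∀ i, m i ≤ c i
  · by_cases hcm : c = m
    · subst hcm
      rw [Nat.sub_self, YoungPath.card_zero_self c hc, det_triangle c hc,
        Nat.factorial_zero]
      push_cast
      rw [one_div, inv_mul_cancel₀ hprodne]
    · have hlt : (∑ i, m i) < ∑ i, c i := by
        have hle' : (∑ i, m i) ≤ ∑ i, c i := Finset.sum_le_sum fun i _ => hle i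
        rcases hle'.lt_or_eq with h | h
        · exact h
        · exfalso
          exact hcm (funext fun i =>
            ((Finset.sum_eq_sum_iff_of_le fun i _ => hle i).1 h i (Finset.mem_univ i)).symm)
      obtain ⟨n', hsub⟩ : ∃ n', (∑ i, c i) - (∑ i, m i) = n' + 1 :=
        ⟨(∑ i, c i) - (∑ i, m i) - 1, by omega⟩
      rw [hsub, YoungPath.card_succ m c hc, Nat.cast_sum]
      -- per-term formula
      have hterm : ∀ i ∈ Finset.univ.filter (fun i => c i ≠ 0),
          (Nat.card (YoungPath k n' m (Function.update c i (c i - 1))) : ℚ)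
            = (n'.factorial : ℚ) / (∏ p, ((c p).factorial : ℚ)) *
              ((c i : ℚ) * Matrix.det (Matrix.of fun p j : Fin k =>
                fallFacQ (Function.update (fun q => (c q : ℚ)) i ((c i : ℚ) - 1) p) (m j))) := by
        intro i hi
        have hci : c i ≠ 0 := (Finset.mem_filter.1 hi).2
        set c' := Function.update c i (c i - 1) with hc'def
        have hc'i : c' i = c i - 1 := Function.update_self i _ c
        have hc'ne : ∀ p, p ≠ i → c' p = c p := fun p hp => Function.update_of_ne hp _ c
        have hcast : ∀ p, ((c' p : ℚ))
            = Function.update (fun q => (c q : ℚ)) i ((c i : ℚ) - 1) p := by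
          intro p
          rcases eq_or_ne p i with rfl | hp
          · rw [hc'i, Function.update_self]
            have : (1 : ℕ) ≤ c p := Nat.one_le_iff_ne_zero.2 hci
            push_cast [Nat.cast_sub this]
            ring
          · rw [hc'ne p hp, Function.update_of_ne hp]
        have hMeq : (Matrix.of fun p j : Fin k => fallFacQ ((c' p : ℚ)) (m j))
            = Matrix.of fun p j : Fin k =>
                fallFacQ (Function.update (fun q => (c q : ℚ)) i ((c i : ℚ) - 1) p) (m j) := by
          ext p j
          simp only [Matrix.of_apply]
          rw [hcast p]
        have hsplit : (∑ p, c p) = c i + ∑ p ∈ Finset.univ \ {i}, c p := by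
          conv_lhs => rw [show c = Function.update c i (c i) from (Function.update_eq_self i c).symm]
          rw [Finset.sum_update_of_mem (Finset.mem_univ i)]
        have hsum' : (∑ p, c' p) = N - 1 := by
          rw [hc'def, Finset.sum_update_of_mem (Finset.mem_univ i)]
          omega
        have hprodc' : (∏ p, ((c' p).factorial : ℚ)) * (c i : ℚ)
            = ∏ p, ((c p).factorial : ℚ) := by
          rw [← Finset.mul_prod_erase Finset.univ (fun p => ((c' p).factorial : ℚ))
            (Finset.mem_univ i),
            ← Finset.mul_prod_erase Finset.univ (fun p => ((c p).factorial : ℚ))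
            (Finset.mem_univ i)]
          have herase : (∏ p ∈ Finset.univ.erase i, ((c' p).factorial : ℚ))
              = ∏ p ∈ Finset.univ.erase i, ((c p).factorial : ℚ) :=
            Finset.prod_congr rfl fun p hp => by rw [hc'ne p (Finset.mem_erase.1 hp).1]
          rw [herase, hc'i]
          have : c i * (c i - 1).factorial = (c i).factorial :=
            Nat.mul_factorial_pred hci
          push_cast [← this]
          ring
        have hprodc'ne : (∏ p, ((c' p).factorial : ℚ)) ≠ 0 :=
          Finset.prod_ne_zero_iff.2 fun p _ => Nat.cast_ne_zero.2 (c' p).factorial_ne_zero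
        by_cases hsm' : StrictMono c'
        · have hIH := IH (N - 1) (by omega) c' hsm' hsum'
          have hn'eq : (∑ p, c' p) - (∑ p, m p) = n' := by omega
          rw [hn'eq] at hIH
          rw [hIH, hMeq]
          rw [eq_comm, div_mul_eq_mul_div, div_mul_eq_mul_div, div_eq_div_iff hprodne
            (by exact hprodc'ne)]
          rw [← hprodc']
          ring
        · rw [YoungPath.card_not_mono _ _ hsm']
          -- exhibit two equal rows
          obtain ⟨i'', hi''lt, hi''eq⟩ : ∃ i'', i'' < i ∧ c i'' = c i - 1 := by
            simp only [StrictMono, not_forall] at hsm'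
            obtain ⟨p, q, hpq, hnlt⟩ := hsm'
            have hq : ¬ c' p < c' q := hnlt
            rcases eq_or_ne q i with rfl | hqi
            · rcases eq_or_ne p q with rfl | hpq' -- p ≠ q since p < q
              · exact absurd hpq (lt_irrefl _)
              · refine ⟨p, hpq, ?_⟩
                rw [hc'ne p hpq', hc'i] at hq
                have := hc hpq
                omega
            · exfalso
              rcases eq_or_ne p i with rfl | hpi
              · rw [hc'i, hc'ne q hqi] at hq
                have := hc hpq
                omega
              · rw [hc'ne p hpi, hc'ne q hqi] at hq
                exact hq (hc hpq)
          have hdet0 : Matrix.det (Matrix.of fun p j : Fin k =>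
              fallFacQ (Function.update (fun q => (c q : ℚ)) i ((c i : ℚ) - 1) p) (m j)) = 0 := by
            apply Matrix.det_zero_of_row_eq (show i'' ≠ i from ne_of_lt hi''lt)
            funext j
            simp only [Matrix.of_apply]
            rw [Function.update_of_ne (ne_of_lt hi''lt), Function.update_self]
            have h1 : (1 : ℕ) ≤ c i := Nat.one_le_iff_ne_zero.2 hci
            have : ((c i'' : ℕ) : ℚ) = (c i : ℚ) - 1 := by
              rw [hi''eq]
              push_cast [Nat.cast_sub h1]
              ring
            rw [this]
          rw [hdet0]
          simp
      rw [Finset.sum_congr rfl hterm, ← Finset.mul_sum]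
      have hext : (∑ i ∈ Finset.univ.filter (fun i => c i ≠ 0),
            (c i : ℚ) * Matrix.det (Matrix.of fun p j : Fin k =>
              fallFacQ (Function.update (fun q => (c q : ℚ)) i ((c i : ℚ) - 1) p) (m j)))
          = ∑ i : Fin k, (c i : ℚ) * Matrix.det (Matrix.of fun p j : Fin k =>
              fallFacQ (Function.update (fun q => (c q : ℚ)) i ((c i : ℚ) - 1) p) (m j)) := by
        apply Finset.sum_filter_of_ne
        intro i _ hne hci
        apply hne
        rw [hci]
        push_cast
        ring
      rw [hext]
      have hdr : (∑ i : Fin k, (c i : ℚ) * Matrix.det (Matrix.of fun p j : Fin k =>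
            fallFacQ (Function.update (fun q => (c q : ℚ)) i ((c i : ℚ) - 1) p) (m j)))
          = ((∑ i, (c i : ℚ)) - ∑ i, (m i : ℚ)) *
            Matrix.det (Matrix.of fun p j : Fin k => fallFacQ ((c p : ℚ)) (m j)) :=
        det_rec (fun q => (c q : ℚ)) m
      rw [hdr]
      have hcastn : ((∑ i, (c i : ℚ)) - ∑ i, (m i : ℚ)) = ((n' + 1 : ℕ) : ℚ) := by
        rw [← Nat.cast_sum, ← Nat.cast_sum, ← hsub]
        push_cast [Nat.cast_sub (le_of_lt hlt)]
        ring
      rw [hcastn]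
      rw [Nat.factorial_succ]
      push_cast
      ring
  · push_neg at hle
    obtain ⟨i, hi⟩ := hle
    rw [YoungPath.card_of_lt i hi, det_vanish c m hc.monotone hm.monotone i hi]
    simp

/-- The number of paths in the restricted Young graph from `(m₁,…,m_k)` to `(n₁,…,n_k)`
(both strictly increasing, `nᵢ ≥ mᵢ`) equals `(n!/∏ nᵢ!) · det(nᵢ^{(m_j)})`, where
`n = ∑ nᵢ - ∑ mᵢ`. -/
theorem stmt_13 (k : ℕ) (hk : 0 < k) (m c : Fin k → ℕ)
    (hm : StrictMono m) (hc : StrictMono c) (hle : ∀ i, m i ≤ c i) :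
    (Nat.card (YoungPath k ((∑ i, c i) - ∑ i, m i) m c) : ℚ) =
      (((∑ i, c i) - ∑ i, m i).factorial : ℚ) / (∏ i, ((c i).factorial : ℚ)) *
        Matrix.det (Matrix.of fun i j : Fin k => fallFacQ (c i : ℚ) (m j)) := by
  exact main_formula m hm (∑ i, c i) c hc rfl
end

section
/- The polynomial function ψ(x_1,...,x_k) = (1/(k-ℓ)!) · ∑_π ∏_{i≤ℓ} x_{π(i)}^{(m_i)} · ∏_{i≤ℓ, i<j≤k} (x_{π(i)}+x_{π(j)})/(x_{π(i)}-x_{π(j)}), where the sum is over all permutations π of {1,...,k} and m_1 > ... > m_ℓ > 0 are fixed positive integers, is a polynomial in x_1,...,x_k (all denominators cancel). -/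
open Finset

/-- The variable `xᵢ` viewed inside the field of rational functions `ℚ(x₁,…,x_k)`. -/
noncomputable def xvar (k : ℕ) (i : Fin k) : FractionRing (MvPolynomial (Fin k) ℚ) :=
  algebraMap (MvPolynomial (Fin k) ℚ) (FractionRing (MvPolynomial (Fin k) ℚ))
    (MvPolynomial.X i)

/-- The symmetrized rational function
`ψ = (1/(k-ℓ)!) ∑_π ∏_{i≤ℓ} x_{π(i)}^{(mᵢ)} ∏_{i≤ℓ, i<j} (x_{π(i)}+x_{π(j)})/(x_{π(i)}-x_{π(j)})`. -/
noncomputable def psiFun (k ℓ : ℕ) (m : Fin k → ℕ) :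
    FractionRing (MvPolynomial (Fin k) ℚ) :=
  (((k - ℓ).factorial : ℚ))⁻¹ •
    ∑ π : Equiv.Perm (Fin k),
      (∏ i ∈ Finset.univ.filter (fun i : Fin k => (i : ℕ) < ℓ),
          ∏ j ∈ Finset.range (m i),
            (xvar k (π i) - (j : FractionRing (MvPolynomial (Fin k) ℚ)))) *
        ∏ p ∈ Finset.univ.filter
            (fun p : Fin k × Fin k => (p.1 : ℕ) < ℓ ∧ p.1 < p.2),
          (xvar k (π p.1) + xvar k (π p.2)) / (xvar k (π p.1) - xvar k (π p.2))


namespace Stmt18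

open MvPolynomial

abbrev R (k : ℕ) : Type := MvPolynomial (Fin k) ℚ

variable {k : ℕ}

/-! ### The substitution `X b := X a` and primality of `X a - X b` -/

/-- substitution `X b := X a` -/
noncomputable def subst (a b : Fin k) : R k →ₐ[ℚ] R k :=
  aeval (fun i => if i = b then X a else X i)

lemma subst_X (a b i : Fin k) :
    subst a b (X i) = if i = b then X a else X i := by
  simp [subst]

lemma subst_sub_self (a b : Fin k) : subst a b (X a - X b : R k) = 0 := by
  rcases eq_or_ne a b with h | h
  · subst h; simp
  · rw [map_sub, subst_X, subst_X, if_neg h, if_pos rfl, sub_self]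

lemma subst_dvd (a b : Fin k) (f : R k) :
    (X a - X b : R k) ∣ f - subst a b f := by
  induction f using MvPolynomial.induction_on with
  | C q => simp [subst]
  | add p q hp hq =>
      rw [map_add]
      have : p + q - (subst a b p + subst a b q)
          = (p - subst a b p) + (q - subst a b q) := by ring
      rw [this]; exact dvd_add hp hq
  | mul_X p i hp =>
      rw [map_mul]
      have : p * X i - subst a b p * subst a b (X i)
          = p * (X i - subst a b (X i)) + subst a b (X i) * (p - subst a b p) := by ring
      rw [this]
      refine dvd_add (Dvd.dvd.mul_left ?_ _) (Dvd.dvd.mul_left hp _)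
      rw [subst_X]
      rcases eq_or_ne i b with h | h
      · rw [if_pos h, h]
        exact ⟨-1, by ring⟩
      · rw [if_neg h, sub_self]; exact dvd_zero _

lemma X_sub_X_ne_zero {a b : Fin k} (h : a ≠ b) : (X a - X b : R k) ≠ 0 := by
  intro h0
  have := congrArg (eval (fun i => if i = a then (1 : ℚ) else 0)) h0
  simp [eval_X, if_neg (Ne.symm h), h.symm] at this

lemma prime_X_sub_X {a b : Fin k} (h : a ≠ b) : Prime (X a - X b : R k) := by
  refine ⟨X_sub_X_ne_zero h, ?_, ?_⟩
  · intro hu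
    have := hu.map (subst a b)
    rw [subst_sub_self] at this
    exact not_isUnit_zero this
  · intro f g hfg
    obtain ⟨c, hc⟩ := hfg
    have h0 : subst a b f * subst a b g = 0 := by
      rw [← map_mul, hc, map_mul, subst_sub_self, zero_mul]
    rcases mul_eq_zero.mp h0 with h1 | h1
    · left
      have := subst_dvd a b f
      rwa [h1, sub_zero] at this
    · right
      have := subst_dvd a b g
      rwa [h1, sub_zero] at this

lemma not_dvd_of_eval (f g : R k) (v : Fin k → ℚ) (hf : eval v f = 0)
    (hg : eval v g ≠ 0) : ¬ f ∣ g := by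
  rintro ⟨c, rfl⟩
  exact hg (by rw [map_mul, hf, zero_mul])

lemma X_sub_X_not_dvd {a b c d : Fin k} (hcd : c ≠ d)
    (h : (c ≠ a ∧ c ≠ b) ∨ (d ≠ a ∧ d ≠ b)) :
    ¬ (X a - X b : R k) ∣ (X c - X d) := by
  rcases h with ⟨h1, h2⟩ | ⟨h1, h2⟩
  · refine not_dvd_of_eval _ _ (fun i => if i = c then 1 else 0) ?_ ?_
    · simp [eval_X, if_neg (Ne.symm h1), if_neg (Ne.symm h2)]
    · simp [eval_X, if_neg (Ne.symm hcd)]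
  · refine not_dvd_of_eval _ _ (fun i => if i = d then 1 else 0) ?_ ?_
    · simp [eval_X, if_neg (Ne.symm h1), if_neg (Ne.symm h2)]
    · simp [eval_X, if_neg hcd]

lemma prod_primes_dvd {ι : Type*} [DecidableEq ι] (s : Finset ι) (f : ι → R k) (n : R k)
    (hp : ∀ i ∈ s, Prime (f i)) (hnd : ∀ i ∈ s, ∀ j ∈ s, i ≠ j → ¬ f i ∣ f j)
    (hd : ∀ i ∈ s, f i ∣ n) : (∏ i ∈ s, f i) ∣ n := by
  induction s using Finset.induction_on with
  | empty => simp only [prod_empty]; exact one_dvd n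
  | insert _ _ hnotmem ih =>
      rename_i a s'
      obtain ⟨m, hm⟩ := ih (fun i hi => hp i (mem_insert_of_mem hi))
        (fun i hi j hj hij => hnd i (mem_insert_of_mem hi) j (mem_insert_of_mem hj) hij)
        (fun i hi => hd i (mem_insert_of_mem hi))
      have hprime := hp a (mem_insert_self a s')
      have : f a ∣ (∏ i ∈ s', f i) * m := hm ▸ hd a (mem_insert_self a s')
      rcases hprime.2.2 _ _ this with h1 | h1
      · obtain ⟨j, hj, hdvd⟩ := (hprime.dvd_finset_prod_iff f).mp h1
        exact absurd hdvd (hnd a (mem_insert_self a s') j (mem_insert_of_mem hj)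
          (fun hh => hnotmem (hh ▸ hj)))
      · obtain ⟨m', hm'⟩ := h1
        rw [prod_insert hnotmem, hm, hm', mul_comm (f a) m']
        exact ⟨m', by ring⟩

/-! ### The Vandermonde polynomial and its antisymmetry -/

noncomputable def V (k : ℕ) : R k := ∏ i : Fin k, ∏ j ∈ Ioi i, (X j - X i)

lemma V_eq_det : V k = (Matrix.vandermonde (fun i : Fin k => (X i : R k))).det :=
  (Matrix.det_vandermonde _).symm

lemma rename_swap_V {a b : Fin k} (h : a ≠ b) :
    rename (Equiv.swap a b) (V k) = - V k := by
  have h1 : rename (Equiv.swap a b) (V k)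
      = ((rename (Equiv.swap a b) : R k →ₐ[ℚ] R k).toRingHom.mapMatrix
          (Matrix.vandermonde fun i : Fin k => (X i : R k))).det := by
    rw [V_eq_det]
    exact RingHom.map_det _ _
  have h2 : (rename (Equiv.swap a b) : R k →ₐ[ℚ] R k).toRingHom.mapMatrix
          (Matrix.vandermonde fun i : Fin k => (X i : R k))
      = (Matrix.vandermonde fun i : Fin k => (X i : R k)).submatrix (Equiv.swap a b) id := by
    ext i j
    simp [Matrix.vandermonde]
  rw [h1, h2, Matrix.det_permute, Equiv.Perm.sign_swap h, ← V_eq_det]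
  simp

lemma V_ne_zero : V k ≠ 0 := by
  refine prod_ne_zero_iff.mpr fun i _ => prod_ne_zero_iff.mpr fun j hj => ?_
  exact X_sub_X_ne_zero (mem_Ioi.mp hj).ne'

/-- The product of the Vandermonde over ordered pairs. -/
lemma V_eq_pairs :
    V k = ∏ p ∈ (univ : Finset (Fin k × Fin k)).filter (fun p => p.1 < p.2),
      (X p.2 - X p.1) := by
  rw [V, Finset.prod_sigma']
  refine Finset.prod_nbij (fun q => (q.1, q.2)) ?_ ?_ ?_ ?_
  · intro q hq
    rw [Finset.mem_sigma] at hq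
    simp only [mem_filter, mem_univ, true_and]
    exact mem_Ioi.mp hq.2
  · intro q hq q' hq' hqq'
    obtain ⟨h1, h2⟩ := Prod.mk.injEq _ _ _ _ ▸ hqq'
    exact Sigma.ext h1 (heq_of_eq h2)
  · intro p hp
    have hp' : p.1 < p.2 := by simpa using hp
    exact ⟨⟨p.1, p.2⟩, Finset.mem_sigma.mpr ⟨mem_univ _, mem_Ioi.mpr hp'⟩, rfl⟩
  · intro q hq
    rfl

/-! ### The numerators and denominators occurring in `ψ` -/

def Sset (k ℓ : ℕ) : Finset (Fin k × Fin k) :=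
  univ.filter (fun p : Fin k × Fin k => (p.1 : ℕ) < ℓ ∧ p.1 < p.2)

lemma mem_Sset {ℓ : ℕ} {p : Fin k × Fin k} :
    p ∈ Sset k ℓ ↔ (p.1 : ℕ) < ℓ ∧ p.1 < p.2 := by
  simp [Sset]

noncomputable def Anum (k ℓ : ℕ) (m : Fin k → ℕ) (π : Equiv.Perm (Fin k)) : R k :=
  (∏ i ∈ univ.filter (fun i : Fin k => (i : ℕ) < ℓ),
      ∏ j ∈ Finset.range (m i), (X (π i) - (j : R k))) *
    ∏ p ∈ Sset k ℓ, (X (π p.1) + X (π p.2))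

noncomputable def Dden (k ℓ : ℕ) (π : Equiv.Perm (Fin k)) : R k :=
  ∏ p ∈ Sset k ℓ, (X (π p.1) - X (π p.2))

lemma X_pi_ne {ℓ : ℕ} (π : Equiv.Perm (Fin k)) {p : Fin k × Fin k} (hp : p ∈ Sset k ℓ) :
    π p.1 ≠ π p.2 :=
  fun h => absurd (π.injective h) (ne_of_lt (mem_Sset.mp hp).2)

lemma Dden_ne_zero {ℓ : ℕ} (π : Equiv.Perm (Fin k)) : Dden k ℓ π ≠ 0 :=
  prod_ne_zero_iff.mpr fun p hp => X_sub_X_ne_zero (X_pi_ne π hp)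

lemma Dden_dvd_V (ℓ : ℕ) (π : Equiv.Perm (Fin k)) : Dden k ℓ π ∣ V k := by
  refine prod_primes_dvd _ _ _ ?_ ?_ ?_
  · intro p hp
    exact prime_X_sub_X (X_pi_ne π hp)
  · intro p hp q hq hpq
    have hp2 := (mem_Sset.mp hp).2
    have hq2 := (mem_Sset.mp hq).2
    refine X_sub_X_not_dvd (X_pi_ne π hq) ?_
    by_cases hc : q.1 = p.2
    · right
      have hq2' : p.2 < q.2 := by rw [← hc]; exact hq2
      have h1 : q.2 ≠ p.1 := ne_of_gt (lt_trans hp2 hq2')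
      have h2 : q.2 ≠ p.2 := ne_of_gt hq2'
      exact ⟨fun h => h1 (π.injective h), fun h => h2 (π.injective h)⟩
    · by_cases hc1 : q.1 = p.1
      · right
        have hne2 : q.2 ≠ p.2 := fun h => hpq (Prod.ext hc1.symm h.symm)
        have hne1 : q.2 ≠ p.1 := fun h => absurd hq2 (by rw [hc1, h]; exact lt_irrefl p.1)
        exact ⟨fun h => hne1 (π.injective h), fun h => hne2 (π.injective h)⟩
      · left
        exact ⟨fun h => hc1 (π.injective h), fun h => hc (π.injective h)⟩
  · intro p hp
    have hne : π p.1 ≠ π p.2 := X_pi_ne π hp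
    rcases lt_or_gt_of_ne hne with hlt | hgt
    · have h1 : (X (π p.2) - X (π p.1) : R k) ∣ V k :=
        dvd_trans (Finset.dvd_prod_of_mem (fun j => (X j - X (π p.1) : R k)) (mem_Ioi.mpr hlt))
          (Finset.dvd_prod_of_mem (fun i => ∏ j ∈ Ioi i, (X j - X i : R k)) (mem_univ (π p.1)))
      exact dvd_trans ⟨-1, by ring⟩ h1
    · exact dvd_trans (Finset.dvd_prod_of_mem (fun j => (X j - X (π p.2) : R k)) (mem_Ioi.mpr hgt))
        (Finset.dvd_prod_of_mem (fun i => ∏ j ∈ Ioi i, (X j - X i : R k)) (mem_univ (π p.2)))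

/-! ### The main argument -/

/-- Shorthand for the algebra map into the fraction field. -/
noncomputable def phm (k : ℕ) : R k →+* FractionRing (R k) := algebraMap _ _

lemma xvar_eq (k : ℕ) (i : Fin k) : xvar k i = phm k (X i) := rfl

lemma phm_inj (k : ℕ) : Function.Injective (phm k) :=
  IsFractionRing.injective _ _

lemma qsmul_eq {A : Type*} [CommSemiring A] [Algebra ℚ A] (q : ℚ) (x : A) :
    q • x = algebraMap ℚ A q * x := by
  rw [← algebraMap_smul A q x, smul_eq_mul]

lemma qsmulK_eq (k : ℕ) (q : ℚ) (x : FractionRing (MvPolynomial (Fin k) ℚ)) :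
    q • x = algebraMap ℚ (FractionRing (MvPolynomial (Fin k) ℚ)) q * x := by
  rw [@Algebra.smul_def ℚ _ _ _ OreLocalization.instAlgebra]
  congr 1
  exact (eq_ratCast _ q).trans (eq_ratCast _ q).symm

set_option maxHeartbeats 1000000 in
lemma key (k ℓ : ℕ) (m : Fin k → ℕ) :
    ∃ p : R k, phm k p = psiFun k ℓ m := by
  classical
  set c : ℚ := (((k - ℓ).factorial : ℚ))⁻¹ with hc
  set t : Equiv.Perm (Fin k) → FractionRing (MvPolynomial (Fin k) ℚ) := fun π =>
    (∏ i ∈ Finset.univ.filter (fun i : Fin k => (i : ℕ) < ℓ),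
        ∏ j ∈ Finset.range (m i),
          (xvar k (π i) - (j : FractionRing (MvPolynomial (Fin k) ℚ)))) *
      ∏ p ∈ Finset.univ.filter
          (fun p : Fin k × Fin k => (p.1 : ℕ) < ℓ ∧ p.1 < p.2),
        (xvar k (π p.1) + xvar k (π p.2)) / (xvar k (π p.1) - xvar k (π p.2)) with ht
  have hpsi : psiFun k ℓ m = c • ∑ π : Equiv.Perm (Fin k), t π := rfl
  choose E hE using fun π : Equiv.Perm (Fin k) => Dden_dvd_V (k := k) ℓ π
  set N : R k := c • ∑ π : Equiv.Perm (Fin k), Anum k ℓ m π * E π with hN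
  have hDφ : ∀ π : Equiv.Perm (Fin k), phm k (Dden k ℓ π) ≠ 0 := fun π =>
    (map_ne_zero_iff (phm k) (phm_inj k)).mpr (Dden_ne_zero π)
  have hSset : Finset.univ.filter
      (fun p : Fin k × Fin k => (p.1 : ℕ) < ℓ ∧ p.1 < p.2) = Sset k ℓ := rfl
  -- the basic push-forward computations
  have hφF : ∀ π : Equiv.Perm (Fin k),
      phm k (∏ i ∈ Finset.univ.filter (fun i : Fin k => (i : ℕ) < ℓ),
        ∏ j ∈ Finset.range (m i), (X (π i) - (j : R k)))
      = ∏ i ∈ Finset.univ.filter (fun i : Fin k => (i : ℕ) < ℓ),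
          ∏ j ∈ Finset.range (m i),
            (xvar k (π i) - (j : FractionRing (MvPolynomial (Fin k) ℚ))) := by
    intro π
    rw [map_prod]
    refine Finset.prod_congr rfl fun i _ => ?_
    rw [map_prod]
    exact Finset.prod_congr rfl fun j _ => by rw [map_sub, map_natCast, xvar_eq]
  have hφG : ∀ π : Equiv.Perm (Fin k),
      phm k (∏ p ∈ Sset k ℓ, (X (π p.1) + X (π p.2)))
      = ∏ p ∈ Sset k ℓ, (xvar k (π p.1) + xvar k (π p.2)) := by
    intro π
    rw [map_prod]
    exact Finset.prod_congr rfl fun p _ => by rw [map_add, xvar_eq, xvar_eq]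
  have hφD : ∀ π : Equiv.Perm (Fin k),
      phm k (Dden k ℓ π)
      = ∏ p ∈ Sset k ℓ, (xvar k (π p.1) - xvar k (π p.2)) := by
    intro π
    rw [Dden, map_prod]
    exact Finset.prod_congr rfl fun p _ => by rw [map_sub, xvar_eq, xvar_eq]
  -- Step 1 : ψ · V = N
  have hterm : ∀ π : Equiv.Perm (Fin k),
      t π * phm k (V k) = phm k (Anum k ℓ m π * E π) := by
    intro π
    have hsplit : t π = phm k (∏ i ∈ Finset.univ.filter (fun i : Fin k => (i : ℕ) < ℓ),
          ∏ j ∈ Finset.range (m i), (X (π i) - (j : R k)))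
        * (phm k (∏ p ∈ Sset k ℓ, (X (π p.1) + X (π p.2))) / phm k (Dden k ℓ π)) := by
      rw [ht]
      simp only []
      rw [hSset, Finset.prod_div_distrib, hφF, hφG, hφD]
    have hV' : phm k (V k) = phm k (Dden k ℓ π) * phm k (E π) := by
      rw [hE π, map_mul]
    rw [hsplit, hV', map_mul, Anum, map_mul]
    have hD := hDφ π
    field_simp
  have key1 : psiFun k ℓ m * phm k (V k) = phm k N := by
    rw [hpsi, hN, qsmulK_eq, qsmul_eq, map_mul, map_sum]
    have htow : phm k (algebraMap ℚ (R k) c) = algebraMap ℚ (FractionRing (R k)) c :=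
      (IsScalarTower.algebraMap_apply ℚ (R k) (FractionRing (R k)) c).symm
    rw [htow, mul_assoc, Finset.sum_mul]
    congr 1
    exact Finset.sum_congr rfl fun π _ => hterm π
  -- Step 2 : each X a - X b divides N
  have hXdvd : ∀ a b : Fin k, a ≠ b → (X a - X b : R k) ∣ N := by
    intro a b hab
    have hg : Function.Injective
        ((phm k).comp (rename (⇑(Equiv.swap a b)) : R k →ₐ[ℚ] R k).toRingHom) :=
      (phm_inj k).comp (rename_injective _ (Equiv.swap a b).injective)
    set Φ : FractionRing (R k) →+* FractionRing (R k) := IsFractionRing.lift hg with hΦdef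
    have hΦ : ∀ f : R k, Φ (phm k f) = phm k (rename (⇑(Equiv.swap a b)) f) := fun f =>
      IsFractionRing.lift_algebraMap hg f
    have hΦx : ∀ i : Fin k, Φ (xvar k i) = xvar k (Equiv.swap a b i) := by
      intro i
      have h0 := hΦ (X i)
      rw [rename_X] at h0
      rw [xvar_eq, xvar_eq]
      exact h0
    have hΦψ : Φ (psiFun k ℓ m) = psiFun k ℓ m := by
      rw [hpsi, qsmulK_eq, map_mul, map_sum]
      have halg : algebraMap ℚ (FractionRing (R k)) c = phm k (C c) := by
        rw [IsScalarTower.algebraMap_apply ℚ (R k) (FractionRing (R k)),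
          MvPolynomial.algebraMap_eq]
        rfl
      have hcΦ : Φ (algebraMap ℚ (FractionRing (R k)) c) = algebraMap ℚ (FractionRing (R k)) c := by
        rw [halg, hΦ, rename_C]
      rw [hcΦ]
      congr 1
      have hb : ∀ π : Equiv.Perm (Fin k), Φ (t π) = t (Equiv.swap a b * π) := by
        intro π
        rw [ht]
        simp only []
        rw [map_mul, map_prod, map_prod]
        congr 1
        · refine Finset.prod_congr rfl fun i _ => ?_
          rw [map_prod]
          refine Finset.prod_congr rfl fun j _ => ?_
          rw [map_sub, map_natCast, hΦx]
          rfl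
        · refine Finset.prod_congr rfl fun p _ => ?_
          rw [map_div₀, map_add, map_sub, hΦx, hΦx]
          rfl
      calc (∑ π : Equiv.Perm (Fin k), Φ (t π))
          = ∑ π : Equiv.Perm (Fin k), t (Equiv.swap a b * π) :=
            Finset.sum_congr rfl fun π _ => hb π
        _ = ∑ π : Equiv.Perm (Fin k), t π := Equiv.sum_comp (Equiv.mulLeft (Equiv.swap a b)) t
    have hrenN : rename (⇑(Equiv.swap a b)) N = - N := by
      apply phm_inj k
      have e1 : phm k (rename (⇑(Equiv.swap a b)) N) = Φ (phm k N) := (hΦ N).symm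
      have e2 : Φ (phm k N) = psiFun k ℓ m * phm k (rename (⇑(Equiv.swap a b)) (V k)) := by
        rw [← key1, map_mul, hΦψ, hΦ]
      have e3 : psiFun k ℓ m * phm k (rename (⇑(Equiv.swap a b)) (V k))
          = - (psiFun k ℓ m * phm k (V k)) := by
        rw [rename_swap_V hab, map_neg]
        ring
      rw [e1, e2, e3, key1, map_neg]
    have hfun : ((fun i => if i = b then (X a : R k) else X i) ∘ (Equiv.swap a b))
        = (fun i => if i = b then (X a : R k) else X i) := by
      funext i
      simp only [Function.comp_apply]
      rcases eq_or_ne i a with rfl | hia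
      · rw [Equiv.swap_apply_left, if_pos rfl, if_neg hab]
      · rcases eq_or_ne i b with rfl | hib
        · rw [Equiv.swap_apply_right, if_neg hab, if_pos rfl]
        · rw [Equiv.swap_apply_of_ne_of_ne hia hib]
    have hsub : subst a b N = 0 := by
      have h2 : subst a b (rename (⇑(Equiv.swap a b)) N) = subst a b N := by
        show (aeval fun i => if i = b then (X a : R k) else X i)
            (rename (⇑(Equiv.swap a b)) N) = _
        rw [aeval_rename, hfun]
        rfl
      rw [hrenN, map_neg] at h2
      have h3 : subst a b N + subst a b N = 0 := by
        nth_rewrite 1 [← h2]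
        exact neg_add_cancel _
      have h4 : (2 : R k) * subst a b N = 0 := by
        rw [two_mul]; exact h3
      have h2ne : (2 : R k) ≠ 0 := by
        have : ((2 : ℕ) : R k) ≠ 0 := Nat.cast_ne_zero.mpr (by norm_num)
        exact_mod_cast this
      exact (mul_eq_zero.mp h4).resolve_left h2ne
    have := subst_dvd a b N
    rwa [hsub, sub_zero] at this
  -- Step 3 : V divides N
  have hVN : V k ∣ N := by
    rw [V_eq_pairs]
    refine prod_primes_dvd _ _ _ ?_ ?_ ?_
    · intro p hp
      exact prime_X_sub_X (mem_filter.mp hp).2.ne'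
    · intro p hp q hq hpq
      have hp2 := (mem_filter.mp hp).2
      have hq2 := (mem_filter.mp hq).2
      refine X_sub_X_not_dvd hq2.ne' ?_
      by_cases hcase : q.2 = p.1
      · right
        have h1 : q.1 < p.1 := hcase ▸ hq2
        exact ⟨ne_of_lt (lt_trans h1 hp2), ne_of_lt h1⟩
      · by_cases hc2 : q.2 = p.2
        · right
          refine ⟨ne_of_lt (hc2 ▸ hq2), fun h => hpq (Prod.ext h.symm hc2.symm)⟩
        · left
          exact ⟨hc2, hcase⟩
    · intro p hp
      exact hXdvd p.2 p.1 (mem_filter.mp hp).2.ne'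
  -- Conclusion
  obtain ⟨M, hM⟩ := hVN
  refine ⟨M, ?_⟩
  have hVφ : phm k (V k) ≠ 0 := (map_ne_zero_iff (phm k) (phm_inj k)).mpr V_ne_zero
  have hfin : phm k (V k) * phm k M = phm k (V k) * psiFun k ℓ m := by
    rw [← map_mul, ← hM, ← key1]
    ring
  exact mul_left_cancel₀ hVφ hfin

end Stmt18

/-- For fixed positive integers `m₁ > m₂ > ⋯ > m_ℓ > 0` (`ℓ ≤ k`), the rational
function `ψ` is in fact a polynomial: all denominators cancel. -/
theorem stmt_18 (k ℓ : ℕ) (hℓ : ℓ ≤ k) (m : Fin k → ℕ)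
    (hpos : ∀ i : Fin k, (i : ℕ) < ℓ → 0 < m i)
    (hanti : ∀ i j : Fin k, i < j → (j : ℕ) < ℓ → m j < m i) :
    ∃ p : MvPolynomial (Fin k) ℚ,
      algebraMap (MvPolynomial (Fin k) ℚ) (FractionRing (MvPolynomial (Fin k) ℚ)) p =
        psiFun k ℓ m := by
  exact Stmt18.key k ℓ m
end
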